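/- Let T > 0, let f : AddCircle T → ℂ be integrable with c₁(f) ≠ 0, let φₐ : ℝ, and let t' : ℝ. Define the shifted signal g : AddCircle T → ℂ by g(x) := f(x − ↑t'). Then c₁(g) ≠ 0 and there exists k : ℤ such that Δφ(g,φₐ) − Δφ(f,φₐ) = −t' + k·T; equivalently ↑(Δφ(g,φₐ)) = ↑(Δφ(f,φₐ) − t') in AddCircle T. That is, the computed phase-shift amounts of a signal and its t'-shifted variant differ by exactly −t' modulo the period T. -/

import Mathlib

open MeasureTheory

/-- `theta T f φ` is the representative in `[0, 2π)` of `arg (c₁ f) − φ` modulo `2π`. -/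
noncomputable def theta (T : ℝ) [Fact (0 < T)] (f : AddCircle T → ℂ) (φ : ℝ) : ℝ :=
  toIcoMod Real.two_pi_pos 0 (Complex.arg (fourierCoeff f 1) - φ)

/-- The computed time-shift amount `Δφ(f, φ)`. -/
noncomputable def deltaPhi (T : ℝ) [Fact (0 < T)] (f : AddCircle T → ℂ) (φ : ℝ) : ℝ :=
  if theta T f φ > Real.pi then (theta T f φ - 2 * Real.pi) * T / (2 * Real.pi)
  else theta T f φ * T / (2 * Real.pi)

/-- The transformation `𝒯(f, φ)`: circularly shift `f` by `Δφ(f, φ)`. -/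
noncomputable def transf (T : ℝ) [Fact (0 < T)] (f : AddCircle T → ℂ) (φ : ℝ) :
    AddCircle T → ℂ :=
  fun x => f (x - (deltaPhi T f φ : AddCircle T))

lemma fourierCoeff_shift {T : ℝ} [Fact (0 < T)] (f : AddCircle T → ℂ) (t' : ℝ) (n : ℤ) :
    fourierCoeff (fun x => f (x - (t' : AddCircle T))) n =
      fourier (-n) (t' : AddCircle T) * fourierCoeff f n := by
  unfold fourierCoeff
  have h := MeasureTheory.integral_add_right_eq_self
    (μ := (AddCircle.haarAddCircle : Measure (AddCircle T)))
    (fun x => fourier (-n) x • f (x - (t' : AddCircle T))) (t' : AddCircle T)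
  simp only [add_sub_cancel_right] at h
  rw [← h]
  have key : ∀ x : AddCircle T, fourier (-n) (x + (t' : AddCircle T)) • f x =
      (fourier (-n) (t' : AddCircle T) : ℂ) • ((fourier (-n) x : ℂ) • f x) := by
    intro x
    simp only [fourier_apply, zsmul_add, AddCircle.toCircle_add, Circle.coe_mul, smul_eq_mul]
    ring
  simp_rw [key]
  rw [MeasureTheory.integral_smul, smul_eq_mul]

/-- The computed phase-shift amounts of a signal and of its `t'`-shifted variant differ
by exactly `−t'` modulo the period `T`. -/
theorem deltaPhi_shift (T : ℝ) [Fact (0 < T)] (f : AddCircle T → ℂ)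
    (hf : Integrable f AddCircle.haarAddCircle) (hc : fourierCoeff f 1 ≠ 0)
    (φₐ t' : ℝ) :
    fourierCoeff (fun x => f (x - (t' : AddCircle T))) 1 ≠ 0 ∧
    ∃ k : ℤ, deltaPhi T (fun x => f (x - (t' : AddCircle T))) φₐ - deltaPhi T f φₐ =
      -t' + (k : ℝ) * T := by
  have hT : (0:ℝ) < T := Fact.out
  have hπ := Real.pi_pos
  set c : ℂ := fourier (-1) ((t' : AddCircle T)) with hcdef
  have hc0 : c ≠ 0 := by
    have : ‖c‖ = 1 := by
      rw [hcdef, fourier_apply]; exact Circle.norm_coe _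
    intro h; rw [h] at this; simp at this
  have hshift := fourierCoeff_shift f t' 1
  set g : AddCircle T → ℂ := fun x => f (x - (t' : AddCircle T)) with hg
  have hg0 : fourierCoeff g 1 ≠ 0 := by
    rw [hshift]; exact mul_ne_zero hc0 hc
  refine ⟨hg0, ?_⟩
  -- the argument of c equals -2π t'/T modulo 2π
  have hcval : c = Complex.exp ((-(2*Real.pi*t'/T) : ℝ) * Complex.I) := by
    rw [hcdef, fourier_coe_apply]
    congr 1
    push_cast
    ring
  have hargc : Complex.arg c =
      toIocMod (mul_pos two_pos Real.pi_pos) (-Real.pi) (-(2*Real.pi*t'/T)) := by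
    rw [hcval, Complex.arg_exp_mul_I]
  -- arg (c * c₁ f) ≡ arg c + arg c₁ f mod 2π
  have hangle : ((Complex.arg (c * fourierCoeff f 1) : Real.Angle)) =
      ((Complex.arg c + Complex.arg (fourierCoeff f 1) : ℝ) : Real.Angle) := by
    rw [Complex.arg_mul_coe_angle hc0 hc, Real.Angle.coe_add]
  obtain ⟨j, hj⟩ := Real.Angle.angle_eq_iff_two_pi_dvd_sub.mp hangle
  -- unfold toIocMod for arg c
  set jc : ℤ := toIocDiv (mul_pos two_pos Real.pi_pos) (-Real.pi) (-(2*Real.pi*t'/T)) with hjc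
  have hargc' : Complex.arg c = -(2*Real.pi*t'/T) - jc * (2 * Real.pi) := by
    rw [hargc, toIocMod, hjc, zsmul_eq_mul]
  -- unfold thetas
  set mf : ℤ := toIcoDiv Real.two_pi_pos 0 (Complex.arg (fourierCoeff f 1) - φₐ) with hmf
  set mg : ℤ := toIcoDiv Real.two_pi_pos 0 (Complex.arg (fourierCoeff g 1) - φₐ) with hmg
  have hthf : theta T f φₐ = (Complex.arg (fourierCoeff f 1) - φₐ) - mf * (2 * Real.pi) := by
    rw [theta, toIcoMod, hmf, zsmul_eq_mul]
  have hthg : theta T g φₐ = (Complex.arg (fourierCoeff g 1) - φₐ) - mg * (2 * Real.pi) := by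
    rw [theta, toIcoMod, hmg, zsmul_eq_mul]
  have hargg : Complex.arg (fourierCoeff g 1) =
      Complex.arg (fourierCoeff f 1) + (-(2*Real.pi*t'/T)) + 2 * Real.pi * (j - jc) := by
    have : fourierCoeff g 1 = c * fourierCoeff f 1 := hshift
    rw [this]
    push_cast
    rw [hargc'] at hj
    linarith
  -- deltaPhi as theta minus epsilon
  obtain ⟨εg, hεg⟩ : ∃ ε : ℤ, deltaPhi T g φₐ = (theta T g φₐ - ε * (2*Real.pi)) * T / (2*Real.pi) := by
    by_cases h : theta T g φₐ > Real.pi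
    · exact ⟨1, by rw [deltaPhi, if_pos h]; push_cast; ring_nf⟩
    · exact ⟨0, by rw [deltaPhi, if_neg h]; push_cast; ring_nf⟩
  obtain ⟨εf, hεf⟩ : ∃ ε : ℤ, deltaPhi T f φₐ = (theta T f φₐ - ε * (2*Real.pi)) * T / (2*Real.pi) := by
    by_cases h : theta T f φₐ > Real.pi
    · exact ⟨1, by rw [deltaPhi, if_pos h]; push_cast; ring_nf⟩
    · exact ⟨0, by rw [deltaPhi, if_neg h]; push_cast; ring_nf⟩
  refine ⟨(j - jc) - mg + mf - εg + εf, ?_⟩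
  rw [hεg, hεf, hthg, hthf, hargg]
  push_cast
  field_simp
  ring
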